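/- The stabilizer of A₀ in SL₃(ℤ), under the action X ↦ X A₀ Xᵗ, is exactly the image of the homomorphism ρ : GL₂(ℤ) → SL₃(ℤ); that is, every X ∈ SL₃(ℤ) with X A₀ Xᵗ = A₀ equals ρ(g) for some g ∈ GL₂(ℤ). -/

import Mathlib

open Matrix

set_option maxHeartbeats 2000000

/-- The matrix `A₀ = [[0, −1/2, 0], [−1/2, 0, 0], [0, 0, 1]]`. -/
noncomputable def A0 : Matrix (Fin 3) (Fin 3) ℚ :=
  !![0, -1/2, 0; -1/2, 0, 0; 0, 0, 1]

/-- The inverse of `2·A₀`-ish: explicit inverse of `A₀`. -/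
noncomputable def N0 : Matrix (Fin 3) (Fin 3) ℚ :=
  !![0, -2, 0; -2, 0, 0; 0, 0, 1]

/-- Auxiliary matrix `ρ([[0,−1],[1,0]])`. -/
def Pm : Matrix (Fin 3) (Fin 3) ℤ := !![0, 1, 0; 1, 0, 0; 0, 0, -1]

/-- Dichotomy: a stabilizer elt is either in the image of ρ, or is of a special degenerate shape. -/
theorem stab_dichotomy (X : Matrix (Fin 3) (Fin 3) ℤ) (hX : X.det = 1)
    (hstab : (X.map (Int.cast : ℤ → ℚ)) * A0 * (X.map (Int.cast : ℤ → ℚ))ᵀ = A0) :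
    (∃ a b c d : ℤ, (a*d - b*c = 1 ∨ a*d - b*c = -1) ∧
      X = (a*d - b*c) •
        !![d^2, c^2, d*c; b^2, a^2, a*b; 2*b*d, 2*a*c, a*d + b*c]) ∨
    (∃ h w v : ℤ, X 2 2 = 2*h - 1 ∧ X 2 0 = 2*w ∧ X 2 1 = 2*v ∧
      X 0 0 = -h ∧ X 1 1 = -h ∧ X 1 2 = -w ∧ X 0 2 = -v) := by
  set M : Matrix (Fin 3) (Fin 3) ℚ := X.map (Int.cast : ℤ → ℚ) with hM
  have hA0N : A0 * N0 = 1 := by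
    rw [A0, N0, Matrix.mul_fin_three, Matrix.one_fin_three]; norm_num
  have hNA0 : N0 * A0 = 1 := by
    rw [A0, N0, Matrix.mul_fin_three, Matrix.one_fin_three]; norm_num
  have hdetM : M.det = 1 := by
    have h0 := RingHom.map_det (Int.castRingHom ℚ) X
    rw [hX] at h0
    simpa [RingHom.mapMatrix_apply] using h0.symm
  have hMB : M * (A0 * Mᵀ * N0) = 1 := by
    calc M * (A0 * Mᵀ * N0) = (M * A0 * Mᵀ) * N0 := by
          simp only [Matrix.mul_assoc]
      _ = A0 * N0 := by rw [hstab]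
      _ = 1 := hA0N
  have hBM : (A0 * Mᵀ * N0) * M = 1 := mul_eq_one_comm.mp hMB
  have hcol : Mᵀ * N0 * M = N0 := by
    calc Mᵀ * N0 * M = (N0 * A0) * (Mᵀ * N0 * M) := by rw [hNA0, Matrix.one_mul]
      _ = N0 * ((A0 * Mᵀ * N0) * M) := by simp only [Matrix.mul_assoc]
      _ = N0 := by rw [hBM, Matrix.mul_one]
  have hadjM : M.adjugate * M = 1 := by
    rw [Matrix.adjugate_mul, hdetM]; simp
  have hadj : M.adjugate = A0 * Mᵀ * N0 := by
    calc M.adjugate = M.adjugate * (M * (A0 * Mᵀ * N0)) := by rw [hMB, Matrix.mul_one]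
      _ = (M.adjugate * M) * (A0 * Mᵀ * N0) := by simp only [Matrix.mul_assoc]
      _ = A0 * Mᵀ * N0 := by rw [hadjM, Matrix.one_mul]
  rw [Matrix.adjugate_fin_three] at hadj
  have E1 : X 0 2 ^ 2 = X 0 0 * X 0 1 := by
    have e := congr_fun (congr_fun hstab 0) 0
    simp [hM, Matrix.mul_apply, Matrix.vecMul, dotProduct, Matrix.vecHead, Matrix.vecTail, Function.comp, Fin.sum_univ_three, A0, Matrix.map_apply, Matrix.transpose_apply] at e
    have : ((X 0 2 ^ 2 : ℤ) : ℚ) = ((X 0 0 * X 0 1 : ℤ) : ℚ) := by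
      push_cast; ring_nf; ring_nf at e; linarith
    exact_mod_cast this
  have E2 : X 1 2 ^ 2 = X 1 0 * X 1 1 := by
    have e := congr_fun (congr_fun hstab 1) 1
    simp [hM, Matrix.mul_apply, Matrix.vecMul, dotProduct, Matrix.vecHead, Matrix.vecTail, Function.comp, Fin.sum_univ_three, A0, Matrix.map_apply, Matrix.transpose_apply] at e
    have : ((X 1 2 ^ 2 : ℤ) : ℚ) = ((X 1 0 * X 1 1 : ℤ) : ℚ) := by
      push_cast; ring_nf; ring_nf at e; linarith
    exact_mod_cast this
  have E3 : X 2 2 ^ 2 = 1 + X 2 0 * X 2 1 := by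
    have e := congr_fun (congr_fun hstab 2) 2
    simp [hM, Matrix.mul_apply, Matrix.vecMul, dotProduct, Matrix.vecHead, Matrix.vecTail, Function.comp, Fin.sum_univ_three, A0, Matrix.map_apply, Matrix.transpose_apply] at e
    have : ((X 2 2 ^ 2 : ℤ) : ℚ) = ((1 + X 2 0 * X 2 1 : ℤ) : ℚ) := by
      push_cast; ring_nf; ring_nf at e; linarith
    exact_mod_cast this
  have E4 : X 0 0 * X 1 1 + X 0 1 * X 1 0 = 1 + 2*(X 0 2 * X 1 2) := by
    have e := congr_fun (congr_fun hstab 0) 1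
    simp [hM, Matrix.mul_apply, Matrix.vecMul, dotProduct, Matrix.vecHead, Matrix.vecTail, Function.comp, Fin.sum_univ_three, A0, Matrix.map_apply, Matrix.transpose_apply] at e
    have : ((X 0 0 * X 1 1 + X 0 1 * X 1 0 : ℤ) : ℚ) = ((1 + 2*(X 0 2 * X 1 2) : ℤ) : ℚ) := by
      push_cast; ring_nf; ring_nf at e; linarith
    exact_mod_cast this
  have E5 : X 0 0 * X 2 1 + X 0 1 * X 2 0 = 2*(X 0 2 * X 2 2) := by
    have e := congr_fun (congr_fun hstab 0) 2
    simp [hM, Matrix.mul_apply, Matrix.vecMul, dotProduct, Matrix.vecHead, Matrix.vecTail, Function.comp, Fin.sum_univ_three, A0, Matrix.map_apply, Matrix.transpose_apply] at e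
    have : ((X 0 0 * X 2 1 + X 0 1 * X 2 0 : ℤ) : ℚ) = ((2*(X 0 2 * X 2 2) : ℤ) : ℚ) := by
      push_cast; ring_nf; ring_nf at e; linarith
    exact_mod_cast this
  have E6 : X 1 0 * X 2 1 + X 1 1 * X 2 0 = 2*(X 1 2 * X 2 2) := by
    have e := congr_fun (congr_fun hstab 1) 2
    simp [hM, Matrix.mul_apply, Matrix.vecMul, dotProduct, Matrix.vecHead, Matrix.vecTail, Function.comp, Fin.sum_univ_three, A0, Matrix.map_apply, Matrix.transpose_apply] at e
    have : ((X 1 0 * X 2 1 + X 1 1 * X 2 0 : ℤ) : ℚ) = ((2*(X 1 2 * X 2 2) : ℤ) : ℚ) := by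
      push_cast; ring_nf; ring_nf at e; linarith
    exact_mod_cast this
  have C1 : X 2 0 ^ 2 = 4*(X 0 0 * X 1 0) := by
    have e := congr_fun (congr_fun hcol 0) 0
    simp [hM, Matrix.mul_apply, Matrix.vecMul, dotProduct, Matrix.vecHead, Matrix.vecTail, Function.comp, Fin.sum_univ_three, N0, Matrix.map_apply, Matrix.transpose_apply] at e
    have : ((X 2 0 ^ 2 : ℤ) : ℚ) = ((4*(X 0 0 * X 1 0) : ℤ) : ℚ) := by
      push_cast; ring_nf; ring_nf at e; linarith
    exact_mod_cast this
  have C2 : X 2 1 ^ 2 = 4*(X 0 1 * X 1 1) := by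
    have e := congr_fun (congr_fun hcol 1) 1
    simp [hM, Matrix.mul_apply, Matrix.vecMul, dotProduct, Matrix.vecHead, Matrix.vecTail, Function.comp, Fin.sum_univ_three, N0, Matrix.map_apply, Matrix.transpose_apply] at e
    have : ((X 2 1 ^ 2 : ℤ) : ℚ) = ((4*(X 0 1 * X 1 1) : ℤ) : ℚ) := by
      push_cast; ring_nf; ring_nf at e; linarith
    exact_mod_cast this
  have C3 : X 2 2 ^ 2 = 1 + 4*(X 0 2 * X 1 2) := by
    have e := congr_fun (congr_fun hcol 2) 2
    simp [hM, Matrix.mul_apply, Matrix.vecMul, dotProduct, Matrix.vecHead, Matrix.vecTail, Function.comp, Fin.sum_univ_three, N0, Matrix.map_apply, Matrix.transpose_apply] at e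
    have : ((X 2 2 ^ 2 : ℤ) : ℚ) = ((1 + 4*(X 0 2 * X 1 2) : ℤ) : ℚ) := by
      push_cast; ring_nf; ring_nf at e; linarith
    exact_mod_cast this
  have A2 : X 0 1 * X 2 2 - X 0 2 * X 2 1 = -(X 0 1) := by
    have e := congr_fun (congr_fun hadj 0) 1
    simp [hM, Matrix.mul_apply, Matrix.vecMul, dotProduct, Matrix.vecHead, Matrix.vecTail, Function.comp, Fin.sum_univ_three, A0, N0, Matrix.map_apply, Matrix.transpose_apply] at e
    have : ((X 0 1 * X 2 2 - X 0 2 * X 2 1 : ℤ) : ℚ) = ((-(X 0 1) : ℤ) : ℚ) := by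
      push_cast; ring_nf; ring_nf at e; linarith
    exact_mod_cast this
  have A3 : 2*(X 0 1 * X 1 2) - 2*(X 0 2 * X 1 1) = -(X 2 1) := by
    have e := congr_fun (congr_fun hadj 0) 2
    simp [hM, Matrix.mul_apply, Matrix.vecMul, dotProduct, Matrix.vecHead, Matrix.vecTail, Function.comp, Fin.sum_univ_three, A0, N0, Matrix.map_apply, Matrix.transpose_apply] at e
    have : ((2*(X 0 1 * X 1 2) - 2*(X 0 2 * X 1 1) : ℤ) : ℚ) = ((-(X 2 1) : ℤ) : ℚ) := by
      push_cast; ring_nf; ring_nf at e; linarith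
    exact_mod_cast this
  have A4 : X 1 0 * X 2 2 - X 1 2 * X 2 0 = -(X 1 0) := by
    have e := congr_fun (congr_fun hadj 1) 0
    simp [hM, Matrix.mul_apply, Matrix.vecMul, dotProduct, Matrix.vecHead, Matrix.vecTail, Function.comp, Fin.sum_univ_three, A0, N0, Matrix.map_apply, Matrix.transpose_apply] at e
    have : ((X 1 0 * X 2 2 - X 1 2 * X 2 0 : ℤ) : ℚ) = ((-(X 1 0) : ℤ) : ℚ) := by
      push_cast; ring_nf; ring_nf at e; linarith
    exact_mod_cast this
  have A6 : 2*(X 0 0 * X 1 2) - 2*(X 0 2 * X 1 0) = X 2 0 := by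
    have e := congr_fun (congr_fun hadj 1) 2
    simp [hM, Matrix.mul_apply, Matrix.vecMul, dotProduct, Matrix.vecHead, Matrix.vecTail, Function.comp, Fin.sum_univ_three, A0, N0, Matrix.map_apply, Matrix.transpose_apply] at e
    have : ((2*(X 0 0 * X 1 2) - 2*(X 0 2 * X 1 0) : ℤ) : ℚ) = ((X 2 0 : ℤ) : ℚ) := by
      push_cast; ring_nf; ring_nf at e; linarith
    exact_mod_cast this
  have A7 : X 1 0 * X 2 1 - X 1 1 * X 2 0 = -2*(X 1 2) := by
    have e := congr_fun (congr_fun hadj 2) 0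
    simp [hM, Matrix.mul_apply, Matrix.vecMul, dotProduct, Matrix.vecHead, Matrix.vecTail, Function.comp, Fin.sum_univ_three, A0, N0, Matrix.map_apply, Matrix.transpose_apply] at e
    have : ((X 1 0 * X 2 1 - X 1 1 * X 2 0 : ℤ) : ℚ) = ((-2*(X 1 2) : ℤ) : ℚ) := by
      push_cast; ring_nf; ring_nf at e; linarith
    exact_mod_cast this
  have A8 : X 0 0 * X 2 1 - X 0 1 * X 2 0 = 2*(X 0 2) := by
    have e := congr_fun (congr_fun hadj 2) 1
    simp [hM, Matrix.mul_apply, Matrix.vecMul, dotProduct, Matrix.vecHead, Matrix.vecTail, Function.comp, Fin.sum_univ_three, A0, N0, Matrix.map_apply, Matrix.transpose_apply] at e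
    have : ((X 0 0 * X 2 1 - X 0 1 * X 2 0 : ℤ) : ℚ) = ((2*(X 0 2) : ℤ) : ℚ) := by
      push_cast; ring_nf; ring_nf at e; linarith
    exact_mod_cast this
  have A9 : X 0 0 * X 1 1 - X 0 1 * X 1 0 = X 2 2 := by
    have e := congr_fun (congr_fun hadj 2) 2
    simp [hM, Matrix.mul_apply, Matrix.vecMul, dotProduct, Matrix.vecHead, Matrix.vecTail, Function.comp, Fin.sum_univ_three, A0, N0, Matrix.map_apply, Matrix.transpose_apply] at e
    have : ((X 0 0 * X 1 1 - X 0 1 * X 1 0 : ℤ) : ℚ) = ((X 2 2 : ℤ) : ℚ) := by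
      push_cast; ring_nf; ring_nf at e; linarith
    exact_mod_cast this
  clear hadj hcol hMB hBM hadjM hdetM hA0N hNA0 hstab hX hM
  -- parity
  obtain ⟨w, HW⟩ : ∃ w : ℤ, X 2 0 = 2*w := by
    have h2 : Even ((X 2 0)^2) := ⟨2*(X 0 0 * X 1 0), by linarith⟩
    obtain ⟨w, hw⟩ := (Int.even_pow.mp h2).1
    exact ⟨w, by linarith⟩
  obtain ⟨v, HV⟩ : ∃ v : ℤ, X 2 1 = 2*v := by
    have h2 : Even ((X 2 1)^2) := ⟨2*(X 0 1 * X 1 1), by linarith⟩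
    obtain ⟨v, hv⟩ := (Int.even_pow.mp h2).1
    exact ⟨v, by linarith⟩
  obtain ⟨h, HH⟩ : ∃ h : ℤ, X 2 2 = 2*h - 1 := by
    have h2 : Odd ((X 2 2)^2) := ⟨2*(X 0 2 * X 1 2), by linarith⟩
    obtain ⟨k, hk⟩ := (Int.odd_pow.mp h2).resolve_right (by norm_num)
    exact ⟨k + 1, by linarith⟩
  -- basic products
  have B0p : 4*(X 0 2 * X 1 2) = 4*(h^2 - h) := by
    linear_combination (-1)*C3 + (X 2 2 + 2*h - 1)*HH
  have B0 : X 0 2 * X 1 2 = h^2 - h := by linarith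
  have B1p : 2*(X 0 0 * X 1 1) = 2*h^2 := by linear_combination E4 + A9 + HH + 2*B0
  have B1 : X 0 0 * X 1 1 = h^2 := by linarith
  have B2p : 2*(X 0 1 * X 1 0) = 2*(h-1)^2 := by linear_combination E4 - A9 - HH + 2*B0
  have B2 : X 0 1 * X 1 0 = (h-1)^2 := by linarith
  have B3p : 4*(w*v) = 4*(h^2 - h) := by
    linear_combination (-1)*E3 + (X 2 2 + 2*h - 1)*HH - (X 2 1)*HW - 2*w*HV
  have B3 : w*v = h^2 - h := by linarith
  have B4p : 2*(w * X 1 2) = 2*(h * X 1 0) := by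
    linear_combination (-1)*A4 + (X 1 0)*HH - (X 1 2)*HW
  have B4 : w * X 1 2 = h * X 1 0 := by linarith
  have B5p : 2*(v * X 0 2) = 2*(h * X 0 1) := by
    linear_combination (-1)*A2 + (X 0 1)*HH - (X 0 2)*HV
  have B5 : v * X 0 2 = h * X 0 1 := by linarith
  have B6p : 4*(X 1 1 * w) = 4*(h * X 1 2) := by
    linear_combination E6 - A7 - 2*(X 1 1)*HW + 2*(X 1 2)*HH
  have B6 : X 1 1 * w = h * X 1 2 := by linarith
  have B7p : 4*(v * X 1 0) = 4*((h-1) * X 1 2) := by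
    linear_combination E6 + A7 - 2*(X 1 0)*HV + 2*(X 1 2)*HH
  have B7 : v * X 1 0 = (h-1) * X 1 2 := by linarith
  have B8p : 4*(X 0 0 * v) = 4*(h * X 0 2) := by
    linear_combination E5 + A8 - 2*(X 0 0)*HV + 2*(X 0 2)*HH
  have B8 : X 0 0 * v = h * X 0 2 := by linarith
  have B9p : 4*(X 0 1 * w) = 4*((h-1) * X 0 2) := by
    linear_combination E5 - A8 - 2*(X 0 1)*HW + 2*(X 0 2)*HH
  have B9 : X 0 1 * w = (h-1) * X 0 2 := by linarith
  have B10p : 2*(X 0 0 * X 1 2) = 2*(w + X 0 2 * X 1 0) := by linear_combination A6 + HW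
  have B10 : X 0 0 * X 1 2 = w + X 0 2 * X 1 0 := by linarith
  have B11p : 2*(X 0 2 * X 1 1) = 2*(v + X 0 1 * X 1 2) := by linear_combination (-1)*A3 + HV
  have B11 : X 0 2 * X 1 1 = v + X 0 1 * X 1 2 := by linarith
  have B12p : 4*(w^2) = 4*(X 0 0 * X 1 0) := by linear_combination C1 - (X 2 0 + 2*w)*HW
  have B12 : w^2 = X 0 0 * X 1 0 := by linarith
  have B13p : 4*(v^2) = 4*(X 0 1 * X 1 1) := by linear_combination C2 - (X 2 1 + 2*v)*HV
  have B13 : v^2 = X 0 1 * X 1 1 := by linarith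
  have P1 : w * X 0 2 = (h-1) * X 0 0 := by
    linear_combination (-(X 0 2))*B10 + (X 0 0)*B0 - (X 1 0)*E1 - (X 0 0)*B2
  have P2 : v * X 1 2 = (h-1) * X 1 1 := by
    linear_combination (-(X 1 2))*B11 + (X 1 1)*B0 - (X 0 1)*E2 - (X 1 1)*B2
  have P3a : X 0 1 * X 1 2 = (h-1) * v := by
    linear_combination (-(X 0 1))*B6 + (X 1 1)*B9 + (h-1)*B11
  have P3 : h * v = X 0 2 * X 1 1 := by linear_combination (-1)*B11 - P3a
  have P4a : X 0 2 * X 1 0 = (h-1) * w := by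
    linear_combination (-(X 1 0))*B8 + (X 0 0)*B7 + (h-1)*B10
  have P4 : h * w = X 0 0 * X 1 2 := by linear_combination (-1)*B10 - P4a
  -- the main identities
  have I1 : (X 0 0 + h)^2 = (X 0 0 + X 1 1 + 2*h) * X 0 0 := by linear_combination (-1)*B1
  have I2 : (X 1 1 + h)^2 = (X 0 0 + X 1 1 + 2*h) * X 1 1 := by linear_combination (-1)*B1
  have I3 : (X 1 2 + w)^2 = (X 0 0 + X 1 1 + 2*h) * X 1 0 := by
    linear_combination E2 + 2*B4 + B12
  have I4 : (X 0 2 + v)^2 = (X 0 0 + X 1 1 + 2*h) * X 0 1 := by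
    linear_combination E1 + 2*B5 + B13
  have I5 : (X 0 0 + h)*(X 1 1 + h) - (X 1 2 + w)*(X 0 2 + v) = X 0 0 + X 1 1 + 2*h := by
    linear_combination B1 - B0 - B3 - P1 - P2
  have I6 : (X 0 0 + h)*(X 1 1 + h) + (X 1 2 + w)*(X 0 2 + v)
      = (X 0 0 + X 1 1 + 2*h) * (2*h - 1) := by
    linear_combination B1 + B0 + B3 + P1 + P2
  have I7 : (X 0 0 + h)*(X 0 2 + v) = (X 0 0 + X 1 1 + 2*h) * X 0 2 := by
    linear_combination B8 + P3
  have I8 : (X 1 1 + h)*(X 1 2 + w) = (X 0 0 + X 1 1 + 2*h) * X 1 2 := by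
    linear_combination B6 + P4
  have I9 : (X 0 0 + h)*(X 1 2 + w) = (X 0 0 + X 1 1 + 2*h) * w := by
    linear_combination (-1)*P4 - B6
  have I10 : (X 1 1 + h)*(X 0 2 + v) = (X 0 0 + X 1 1 + 2*h) * v := by
    linear_combination (-1)*P3 - B8
  by_cases hS : X 0 0 + X 1 1 + 2*h = 0
  · -- degenerate case
    right
    rw [hS, zero_mul] at I1 I2 I3 I4
    have hp0 : X 0 0 + h = 0 := (pow_eq_zero_iff two_ne_zero).mp I1
    have hq0 : X 1 1 + h = 0 := (pow_eq_zero_iff two_ne_zero).mp I2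
    have hr0 : X 1 2 + w = 0 := (pow_eq_zero_iff two_ne_zero).mp I3
    have hs0 : X 0 2 + v = 0 := (pow_eq_zero_iff two_ne_zero).mp I4
    exact ⟨h, w, v, HH, HW, HV, by linarith, by linarith, by linarith, by linarith⟩
  · -- main case : gcd construction
    left
    have hGp : ((Int.gcd ((Int.gcd (X 0 0 + h) (X 1 1 + h) : ℤ)) ((Int.gcd (X 1 2 + w) (X 0 2 + v) : ℤ)) : ℤ)) ∣ X 0 0 + h :=
      dvd_trans (Int.gcd_dvd_left _ _) (Int.gcd_dvd_left _ _)
    have hGq : ((Int.gcd ((Int.gcd (X 0 0 + h) (X 1 1 + h) : ℤ)) ((Int.gcd (X 1 2 + w) (X 0 2 + v) : ℤ)) : ℤ)) ∣ X 1 1 + h :=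
      dvd_trans (Int.gcd_dvd_left _ _) (Int.gcd_dvd_right _ _)
    have hGr : ((Int.gcd ((Int.gcd (X 0 0 + h) (X 1 1 + h) : ℤ)) ((Int.gcd (X 1 2 + w) (X 0 2 + v) : ℤ)) : ℤ)) ∣ X 1 2 + w :=
      dvd_trans (Int.gcd_dvd_right _ _) (Int.gcd_dvd_left _ _)
    have hGs : ((Int.gcd ((Int.gcd (X 0 0 + h) (X 1 1 + h) : ℤ)) ((Int.gcd (X 1 2 + w) (X 0 2 + v) : ℤ)) : ℤ)) ∣ X 0 2 + v :=
      dvd_trans (Int.gcd_dvd_right _ _) (Int.gcd_dvd_right _ _)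
    obtain ⟨g, hgdef⟩ : ∃ g : ℤ, g = ((Int.gcd ((Int.gcd (X 0 0 + h) (X 1 1 + h) : ℤ)) ((Int.gcd (X 1 2 + w) (X 0 2 + v) : ℤ)) : ℤ)) := ⟨_, rfl⟩
    rw [← hgdef] at hGp hGq hGr hGs
    obtain ⟨p1, hp1⟩ := hGp
    obtain ⟨q1, hq1⟩ := hGq
    obtain ⟨r1, hr1⟩ := hGr
    obtain ⟨s1, hs1⟩ := hGs
    have hgne : g ≠ 0 := by
      intro hg0
      rw [hg0] at hgdef
      have h1 : ((X 0 0 + h).gcd (X 1 1 + h)).gcd ((X 1 2 + w).gcd (X 0 2 + v)) = 0 := by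
        exact_mod_cast hgdef.symm
      have h3 := Int.gcd_eq_zero_iff.mp (Nat.eq_zero_of_gcd_eq_zero_left h1)
      have h5 := Int.gcd_eq_zero_iff.mp (Nat.eq_zero_of_gcd_eq_zero_right h1)
      apply hS
      rw [← I5, h3.1, h3.2, h5.1, h5.2]
      ring
    have hgg : g * g ≠ 0 := mul_ne_zero hgne hgne
    obtain ⟨m, hmS⟩ : g * g ∣ X 0 0 + X 1 1 + 2*h := by
      rw [← I5]
      exact dvd_sub (mul_dvd_mul ⟨p1, hp1⟩ ⟨q1, hq1⟩) (mul_dvd_mul ⟨r1, hr1⟩ ⟨s1, hs1⟩)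
    have hc : p1*q1 - r1*s1 = m := by
      apply mul_left_cancel₀ hgg
      linear_combination I5 + hmS - (X 1 1 + h)*hp1 - (g*p1)*hq1 + (X 0 2 + v)*hr1 + (g*r1)*hs1
    have hp2 : p1^2 = m * X 0 0 := by
      apply mul_left_cancel₀ hgg
      linear_combination I1 + (X 0 0)*hmS - (X 0 0 + h + g*p1)*hp1
    have hq2 : q1^2 = m * X 1 1 := by
      apply mul_left_cancel₀ hgg
      linear_combination I2 + (X 1 1)*hmS - (X 1 1 + h + g*q1)*hq1
    have hr2 : r1^2 = m * X 1 0 := by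
      apply mul_left_cancel₀ hgg
      linear_combination I3 + (X 1 0)*hmS - (X 1 2 + w + g*r1)*hr1
    have hs2 : s1^2 = m * X 0 1 := by
      apply mul_left_cancel₀ hgg
      linear_combination I4 + (X 0 1)*hmS - (X 0 2 + v + g*s1)*hs1
    have hps : p1*s1 = m * X 0 2 := by
      apply mul_left_cancel₀ hgg
      linear_combination I7 + (X 0 2)*hmS - (X 0 2 + v)*hp1 - (g*p1)*hs1
    have hqr : q1*r1 = m * X 1 2 := by
      apply mul_left_cancel₀ hgg
      linear_combination I8 + (X 1 2)*hmS - (X 1 2 + w)*hq1 - (g*q1)*hr1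
    have hpr : p1*r1 = m * w := by
      apply mul_left_cancel₀ hgg
      linear_combination I9 + w*hmS - (X 1 2 + w)*hp1 - (g*p1)*hr1
    have hqs : q1*s1 = m * v := by
      apply mul_left_cancel₀ hgg
      linear_combination I10 + v*hmS - (X 0 2 + v)*hq1 - (g*q1)*hs1
    have hpq2 : p1*q1 + r1*s1 = m * X 2 2 := by
      apply mul_left_cancel₀ hgg
      linear_combination I6 + (X 2 2)*hmS - (X 1 1 + h)*hp1 - (g*p1)*hq1
        - (X 0 2 + v)*hr1 - (g*r1)*hs1 - (X 0 0 + X 1 1 + 2*h)*HH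
    have hm0 : m ≠ 0 := by
      intro h0
      rw [h0, mul_zero] at hmS
      exact hS hmS
    have hm1 : m = 1 ∨ m = -1 := by
      by_contra hcon
      push_neg at hcon
      have hma : m.natAbs ≠ 1 := by
        intro h1
        rcases Int.natAbs_eq_iff.mp h1 with h2 | h2 <;> simp [h2] at hcon
      obtain ⟨P, hPp, hPd⟩ := Nat.exists_prime_and_dvd hma
      have hPZ : Prime (P : ℤ) := Nat.prime_iff_prime_int.mp hPp
      have hPm : (P : ℤ) ∣ m := Int.natCast_dvd.mpr (by simpa using hPd)
      have hdp : (P:ℤ) ∣ p1 := hPZ.dvd_of_dvd_pow (n := 2) (hp2 ▸ hPm.mul_right (X 0 0))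
      have hdq : (P:ℤ) ∣ q1 := hPZ.dvd_of_dvd_pow (n := 2) (hq2 ▸ hPm.mul_right (X 1 1))
      have hdr : (P:ℤ) ∣ r1 := hPZ.dvd_of_dvd_pow (n := 2) (hr2 ▸ hPm.mul_right (X 1 0))
      have hds : (P:ℤ) ∣ s1 := hPZ.dvd_of_dvd_pow (n := 2) (hs2 ▸ hPm.mul_right (X 0 1))
      have hgp : g * P ∣ X 0 0 + h := by
        obtain ⟨t, ht⟩ := hdp; exact ⟨t, by rw [hp1, ht]; ring⟩
      have hgq : g * P ∣ X 1 1 + h := by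
        obtain ⟨t, ht⟩ := hdq; exact ⟨t, by rw [hq1, ht]; ring⟩
      have hgr : g * P ∣ X 1 2 + w := by
        obtain ⟨t, ht⟩ := hdr; exact ⟨t, by rw [hr1, ht]; ring⟩
      have hgs : g * P ∣ X 0 2 + v := by
        obtain ⟨t, ht⟩ := hds; exact ⟨t, by rw [hs1, ht]; ring⟩
      have hgg2 : g * P ∣ g := by
        nth_rewrite 2 [hgdef]
        exact Int.dvd_coe_gcd (Int.dvd_coe_gcd hgp hgq) (Int.dvd_coe_gcd hgr hgs)
      have hP1 : (P:ℤ) ∣ 1 := by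
        exact (mul_dvd_mul_iff_left hgne).mp (by simpa using hgg2)
      have hP1n : P ∣ 1 := by exact_mod_cast Int.natCast_dvd.mp hP1
      exact (Nat.Prime.one_lt hPp).ne' (Nat.dvd_one.mp hP1n)
    have hmm : m * m = 1 := by rcases hm1 with h1 | h1 <;> rw [h1] <;> norm_num
    refine ⟨q1, r1, s1, p1, ?_, ?_⟩
    · rw [show q1*p1 - r1*s1 = m from by linear_combination hc]
      exact hm1
    · ext i j
      fin_cases i <;> fin_cases j <;>
        simp only [Matrix.smul_apply, smul_eq_mul, Matrix.cons_val', Matrix.cons_val_zero,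
          Matrix.cons_val_one, Matrix.head_cons, Matrix.empty_val', Matrix.cons_val_fin_one,
          Matrix.head_fin_const, Matrix.of_apply, Matrix.cons_val_two, Matrix.tail_cons,
          Fin.isValue, Fin.zero_eta, Fin.mk_one, Fin.reduceFinMk]
      · linear_combination (-(X 0 0))*hmm + (-m)*hp2 + (-(p1^2))*hc
      · linear_combination (-(X 0 1))*hmm + (-m)*hs2 + (-(s1^2))*hc
      · linear_combination (-(X 0 2))*hmm + (-m)*hps + (-(p1*s1))*hc
      · linear_combination (-(X 1 0))*hmm + (-m)*hr2 + (-(r1^2))*hc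
      · linear_combination (-(X 1 1))*hmm + (-m)*hq2 + (-(q1^2))*hc
      · linear_combination (-(X 1 2))*hmm + (-m)*hqr + (-(q1*r1))*hc
      · linear_combination HW + 2*((-w)*hmm + (-m)*hpr + (-(p1*r1))*hc)
      · linear_combination HV + 2*((-v)*hmm + (-m)*hqs + (-(q1*s1))*hc)
      · linear_combination (-(X 2 2))*hmm + (-m)*hpq2 + (-(p1*q1+r1*s1))*hc

/-- The stabilizer of `A₀` in `SL₃(ℤ)` under `X ↦ X A₀ Xᵀ` is exactly the image of
`ρ : GL₂(ℤ) → SL₃(ℤ)`: every `X ∈ SL₃(ℤ)` with `X A₀ Xᵀ = A₀` equals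
`ρ([[a,b],[c,d]]) = (1/(ad−bc))·[[d²,c²,dc],[b²,a²,ab],[2bd,2ac,ad+bc]]`
for some `[[a,b],[c,d]] ∈ GL₂(ℤ)` (and `1/(ad−bc) = ad−bc` since `ad−bc = ±1`). -/
theorem stab_A0_eq_image_rho (X : Matrix (Fin 3) (Fin 3) ℤ) (hX : X.det = 1)
    (hstab : (X.map (Int.cast : ℤ → ℚ)) * A0 * (X.map (Int.cast : ℤ → ℚ))ᵀ = A0) :
    ∃ a b c d : ℤ, (a*d - b*c = 1 ∨ a*d - b*c = -1) ∧
      X = (a*d - b*c) •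
        !![d^2, c^2, d*c; b^2, a^2, a*b; 2*b*d, 2*a*c, a*d + b*c] := by
  rcases stab_dichotomy X hX hstab with h1 | ⟨h, w, v, hXh, hXw, hXv, hX00, hX11, hX12, hX02⟩
  · exact h1
  have hPP : Pm * Pm = 1 := by
    rw [Pm, Matrix.mul_fin_three, Matrix.one_fin_three]; norm_num
  have hdetP : Pm.det = 1 := by rw [Pm, Matrix.det_fin_three]; decide
  have hdetY : (X * Pm).det = 1 := by rw [Matrix.det_mul, hX, hdetP, one_mul]
  have hmap : (X * Pm).map (Int.cast : ℤ → ℚ)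
      = (X.map (Int.cast : ℤ → ℚ)) * (Pm.map (Int.cast : ℤ → ℚ)) := by
    ext i j
    simp only [Matrix.map_apply, Matrix.mul_apply, Fin.sum_univ_three]
    push_cast
    ring
  have hQ : (Pm.map (Int.cast : ℤ → ℚ)) * A0 * (Pm.map (Int.cast : ℤ → ℚ))ᵀ = A0 := by
    ext i j
    fin_cases i <;> fin_cases j <;>
      simp only [A0, Matrix.mul_apply, Fin.sum_univ_three, Pm, Matrix.cons_val', Matrix.cons_val_zero, Matrix.cons_val_one, Matrix.head_cons, Matrix.empty_val', Matrix.cons_val_fin_one, Matrix.head_fin_const, Matrix.of_apply, Matrix.cons_val_two, Matrix.cons_val_succ, Matrix.tail_cons, Fin.isValue, Fin.zero_eta, Fin.mk_one, Fin.reduceFinMk, Matrix.vecHead, Matrix.vecTail, Function.comp, Matrix.smul_apply, smul_eq_mul, Matrix.transpose_apply, Matrix.map_apply] <;> norm_num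
  have hstabY : ((X*Pm).map (Int.cast : ℤ → ℚ)) * A0 * ((X*Pm).map (Int.cast : ℤ → ℚ))ᵀ = A0 := by
    rw [hmap, Matrix.transpose_mul]
    calc (X.map (Int.cast : ℤ → ℚ) * Pm.map (Int.cast : ℤ → ℚ)) * A0 *
          ((Pm.map (Int.cast : ℤ → ℚ))ᵀ * (X.map (Int.cast : ℤ → ℚ))ᵀ)
        = X.map (Int.cast : ℤ → ℚ) * ((Pm.map (Int.cast : ℤ → ℚ)) * A0 * (Pm.map (Int.cast : ℤ → ℚ))ᵀ) * (X.map (Int.cast : ℤ → ℚ))ᵀ := by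
          simp only [Matrix.mul_assoc]
      _ = X.map (Int.cast : ℤ → ℚ) * A0 * (X.map (Int.cast : ℤ → ℚ))ᵀ := by rw [hQ]
      _ = A0 := hstab
  rcases stab_dichotomy (X*Pm) hdetY hstabY with ⟨a', b', c', d', hd, hYeq⟩ |
    ⟨h', w', v', hY22, hY20, hY21, hY00, hY11, hY12, hY02⟩
  · refine ⟨-b', a', -d', c', ?_, ?_⟩
    · rw [show -b' * c' - a' * -d' = a'*d' - b'*c' by ring]
      exact hd
    · rw [show -b' * c' - a' * -d' = a'*d' - b'*c' by ring]
      calc X = (X * Pm) * Pm := by rw [Matrix.mul_assoc, hPP, Matrix.mul_one]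
        _ = ((a'*d' - b'*c') •
            !![d'^2, c'^2, d'*c'; b'^2, a'^2, a'*b'; 2*b'*d', 2*a'*c', a'*d' + b'*c']) * Pm := by
              rw [hYeq]
        _ = (a'*d' - b'*c') •
            (!![d'^2, c'^2, d'*c'; b'^2, a'^2, a'*b'; 2*b'*d', 2*a'*c', a'*d' + b'*c'] * Pm) :=
              Matrix.smul_mul _ _ _
        _ = (a'*d' - b'*c') •
            !![c'^2, (-d')^2, c' * -d'; a'^2, (-b')^2, -b' * a';
               2*a'*c', 2 * -b' * -d', -b' * c' + a' * -d'] := by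
              congr 1
              ext i j
              fin_cases i <;> fin_cases j <;>
                simp only [Matrix.mul_apply, Fin.sum_univ_three, Pm, Matrix.cons_val', Matrix.cons_val_zero, Matrix.cons_val_one, Matrix.head_cons, Matrix.empty_val', Matrix.cons_val_fin_one, Matrix.head_fin_const, Matrix.of_apply, Matrix.cons_val_two, Matrix.cons_val_succ, Matrix.tail_cons, Fin.isValue, Fin.zero_eta, Fin.mk_one, Fin.reduceFinMk, Matrix.vecHead, Matrix.vecTail, Function.comp, Matrix.smul_apply, smul_eq_mul, Matrix.transpose_apply, Matrix.map_apply] <;> ring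
  · -- doubly degenerate case
    have hYa : (X*Pm) 0 0 = X 0 1 := by simp only [Matrix.mul_apply, Fin.sum_univ_three, Pm, Matrix.cons_val', Matrix.cons_val_zero, Matrix.cons_val_one, Matrix.head_cons, Matrix.empty_val', Matrix.cons_val_fin_one, Matrix.head_fin_const, Matrix.of_apply, Matrix.cons_val_two, Matrix.cons_val_succ, Matrix.tail_cons, Fin.isValue, Fin.zero_eta, Fin.mk_one, Fin.reduceFinMk, Matrix.vecHead, Matrix.vecTail, Function.comp, Matrix.smul_apply, smul_eq_mul, Matrix.transpose_apply, Matrix.map_apply]; ring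
    have hYc : (X*Pm) 0 2 = -(X 0 2) := by simp only [Matrix.mul_apply, Fin.sum_univ_three, Pm, Matrix.cons_val', Matrix.cons_val_zero, Matrix.cons_val_one, Matrix.head_cons, Matrix.empty_val', Matrix.cons_val_fin_one, Matrix.head_fin_const, Matrix.of_apply, Matrix.cons_val_two, Matrix.cons_val_succ, Matrix.tail_cons, Fin.isValue, Fin.zero_eta, Fin.mk_one, Fin.reduceFinMk, Matrix.vecHead, Matrix.vecTail, Function.comp, Matrix.smul_apply, smul_eq_mul, Matrix.transpose_apply, Matrix.map_apply]; ring
    have hYd : (X*Pm) 1 1 = X 1 0 := by simp only [Matrix.mul_apply, Fin.sum_univ_three, Pm, Matrix.cons_val', Matrix.cons_val_zero, Matrix.cons_val_one, Matrix.head_cons, Matrix.empty_val', Matrix.cons_val_fin_one, Matrix.head_fin_const, Matrix.of_apply, Matrix.cons_val_two, Matrix.cons_val_succ, Matrix.tail_cons, Fin.isValue, Fin.zero_eta, Fin.mk_one, Fin.reduceFinMk, Matrix.vecHead, Matrix.vecTail, Function.comp, Matrix.smul_apply, smul_eq_mul, Matrix.transpose_apply, Matrix.map_apply]; ring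
    have hYf : (X*Pm) 1 2 = -(X 1 2) := by simp only [Matrix.mul_apply, Fin.sum_univ_three, Pm, Matrix.cons_val', Matrix.cons_val_zero, Matrix.cons_val_one, Matrix.head_cons, Matrix.empty_val', Matrix.cons_val_fin_one, Matrix.head_fin_const, Matrix.of_apply, Matrix.cons_val_two, Matrix.cons_val_succ, Matrix.tail_cons, Fin.isValue, Fin.zero_eta, Fin.mk_one, Fin.reduceFinMk, Matrix.vecHead, Matrix.vecTail, Function.comp, Matrix.smul_apply, smul_eq_mul, Matrix.transpose_apply, Matrix.map_apply]; ring
    have hYg : (X*Pm) 2 0 = X 2 1 := by simp only [Matrix.mul_apply, Fin.sum_univ_three, Pm, Matrix.cons_val', Matrix.cons_val_zero, Matrix.cons_val_one, Matrix.head_cons, Matrix.empty_val', Matrix.cons_val_fin_one, Matrix.head_fin_const, Matrix.of_apply, Matrix.cons_val_two, Matrix.cons_val_succ, Matrix.tail_cons, Fin.isValue, Fin.zero_eta, Fin.mk_one, Fin.reduceFinMk, Matrix.vecHead, Matrix.vecTail, Function.comp, Matrix.smul_apply, smul_eq_mul, Matrix.transpose_apply, Matrix.map_apply]; ring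
    have hYh : (X*Pm) 2 1 = X 2 0 := by simp only [Matrix.mul_apply, Fin.sum_univ_three, Pm, Matrix.cons_val', Matrix.cons_val_zero, Matrix.cons_val_one, Matrix.head_cons, Matrix.empty_val', Matrix.cons_val_fin_one, Matrix.head_fin_const, Matrix.of_apply, Matrix.cons_val_two, Matrix.cons_val_succ, Matrix.tail_cons, Fin.isValue, Fin.zero_eta, Fin.mk_one, Fin.reduceFinMk, Matrix.vecHead, Matrix.vecTail, Function.comp, Matrix.smul_apply, smul_eq_mul, Matrix.transpose_apply, Matrix.map_apply]; ring
    have hYi : (X*Pm) 2 2 = -(X 2 2) := by simp only [Matrix.mul_apply, Fin.sum_univ_three, Pm, Matrix.cons_val', Matrix.cons_val_zero, Matrix.cons_val_one, Matrix.head_cons, Matrix.empty_val', Matrix.cons_val_fin_one, Matrix.head_fin_const, Matrix.of_apply, Matrix.cons_val_two, Matrix.cons_val_succ, Matrix.tail_cons, Fin.isValue, Fin.zero_eta, Fin.mk_one, Fin.reduceFinMk, Matrix.vecHead, Matrix.vecTail, Function.comp, Matrix.smul_apply, smul_eq_mul, Matrix.transpose_apply, Matrix.map_apply]; ring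
    rw [hYa] at hY00
    rw [hYc] at hY02
    rw [hYd] at hY11
    rw [hYf] at hY12
    rw [hYg] at hY20
    rw [hYh] at hY21
    rw [hYi] at hY22
    -- now : hY00 : X 0 1 = -h', hY02 : -(X 0 2) = -v', hY11 : X 1 0 = -h',
    -- hY12 : -(X 1 2) = -w', hY20 : X 2 1 = 2*w', hY21 : X 2 0 = 2*v', hY22 : -(X 2 2) = 2*h'-1
    have hvw : v = -w := by linarith [hXv, hY20, hXw, hY21, hX12, hY12]
    have hX02w : X 0 2 = w := by linarith [hX02, hY02, hXw, hY21]
    have hX01 : X 0 1 = h - 1 := by linarith [hY00, hY22, hXh]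
    have hX10 : X 1 0 = h - 1 := by linarith [hY11, hY22, hXh]
    have E1 : X 0 2 ^ 2 = X 0 0 * X 0 1 := by
      have e := congr_fun (congr_fun hstab 0) 0
      simp [Matrix.mul_apply, Matrix.vecMul, dotProduct, Matrix.vecHead, Matrix.vecTail, Function.comp, Fin.sum_univ_three, A0, Matrix.map_apply, Matrix.transpose_apply] at e
      have : ((X 0 2 ^ 2 : ℤ) : ℚ) = ((X 0 0 * X 0 1 : ℤ) : ℚ) := by
        push_cast; ring_nf; ring_nf at e; linarith
      exact_mod_cast this
    have e1 := E1
    rw [hX02w, hX00, hX01] at e1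
    have hw2 : w^2 = h - h^2 := by linear_combination e1
    have hnn : 0 ≤ h^2 - h := by
      rcases le_or_gt h 0 with hc | hc
      · nlinarith
      · nlinarith
    have hww : w^2 = 0 := by nlinarith [sq_nonneg w]
    have hw0 : w = 0 := (pow_eq_zero_iff two_ne_zero).mp hww
    have hv0 : v = 0 := by rw [hvw, hw0, neg_zero]
    have hhh : h * (h - 1) = 0 := by
      rw [hw0] at hw2
      linear_combination hw2
    rw [hw0] at hX02w hX12 hXw
    rw [hv0] at hXv
    rcases mul_eq_zero.mp hhh with h0 | h0
    · -- h = 0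
      rw [h0] at hX00 hX01 hX10 hX11 hXh
      refine ⟨0, 1, 1, 0, Or.inr (by norm_num), ?_⟩
      ext i j
      fin_cases i <;> fin_cases j <;>
        simp only [Matrix.mul_apply, Fin.sum_univ_three, Pm, Matrix.cons_val', Matrix.cons_val_zero, Matrix.cons_val_one, Matrix.head_cons, Matrix.empty_val', Matrix.cons_val_fin_one, Matrix.head_fin_const, Matrix.of_apply, Matrix.cons_val_two, Matrix.cons_val_succ, Matrix.tail_cons, Fin.isValue, Fin.zero_eta, Fin.mk_one, Fin.reduceFinMk, Matrix.vecHead, Matrix.vecTail, Function.comp, Matrix.smul_apply, smul_eq_mul, Matrix.transpose_apply, Matrix.map_apply, hX00, hX01, hX02w, hX10, hX11, hX12, hXw, hXv, hXh] <;> norm_num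
    · -- h = 1
      have h1 : h = 1 := by linarith
      rw [h1] at hX00 hX01 hX10 hX11 hXh
      refine ⟨1, 0, 0, -1, Or.inr (by norm_num), ?_⟩
      ext i j
      fin_cases i <;> fin_cases j <;>
        simp only [Matrix.mul_apply, Fin.sum_univ_three, Pm, Matrix.cons_val', Matrix.cons_val_zero, Matrix.cons_val_one, Matrix.head_cons, Matrix.empty_val', Matrix.cons_val_fin_one, Matrix.head_fin_const, Matrix.of_apply, Matrix.cons_val_two, Matrix.cons_val_succ, Matrix.tail_cons, Fin.isValue, Fin.zero_eta, Fin.mk_one, Fin.reduceFinMk, Matrix.vecHead, Matrix.vecTail, Function.comp, Matrix.smul_apply, smul_eq_mul, Matrix.transpose_apply, Matrix.map_apply, hX00, hX01, hX02w, hX10, hX11, hX12, hXw, hXv, hXh] <;> norm_num
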